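/- The follow automaton A_f(α), defined as the quotient of the position automaton A_pos(α) by the follow relation ≡_f, accepts exactly L(α). -/

import Mathlib

open RegularExpression
open scoped Classical

variable {σ : Type*}

/-- Alphabetic size: number of letter occurrences. -/
def alph : RegularExpression σ → ℕ
  | zero => 0
  | epsilon => 0
  | char _ => 1
  | plus P Q => alph P + alph Q
  | comp P Q => alph P + alph Q
  | RegularExpression.star P => alph P

/-- Mark every letter occurrence with its position; `n` is the number of
positions used so far (positions are `n+1, n+2, …`). -/
def mark : RegularExpression σ → ℕ → RegularExpression (σ × ℕ)
  | zero, _ => zero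
  | epsilon, _ => epsilon
  | char a, n => char (a, n + 1)
  | plus P Q, n => plus (mark P n) (mark Q (n + alph P))
  | comp P Q, n => comp (mark P n) (mark Q (n + alph P))
  | RegularExpression.star P, n => RegularExpression.star (mark P n)

/-- The marked version `ᾱ` of `α`, with positions `1, …, |α|_Σ`. -/
def marked (α : RegularExpression σ) : RegularExpression (σ × ℕ) :=
  mark α 0

/-- `first(α)`: positions that can begin a word of `L(ᾱ)`. -/
def first (α : RegularExpression σ) : Set ℕ :=
  {j | ∃ a w, ((a, j) :: w) ∈ (marked α).matches'}

/-- `last(α)`: positions that can end a word of `L(ᾱ)`. -/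
def last (α : RegularExpression σ) : Set ℕ :=
  {j | ∃ a w, (w ++ [(a, j)]) ∈ (marked α).matches'}

/-- `follow(α,i)`: positions that can follow position `i` in a word of `L(ᾱ)`,
with `follow(α,0) = first(α)`. -/
def follow (α : RegularExpression σ) (i : ℕ) : Set ℕ :=
  if i = 0 then first α
  else {j | ∃ a b u v, (u ++ (a, i) :: (b, j) :: v) ∈ (marked α).matches'}

/-- The letter occurring at position `j` (1-indexed) of `α`, if any. -/
def letterAt : RegularExpression σ → ℕ → Option σ
  | zero, _ => none
  | epsilon, _ => none
  | char a, j => if j = 1 then some a else none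
  | plus P Q, j => if j ≤ alph P then letterAt P j else letterAt Q (j - alph P)
  | comp P Q, j => if j ≤ alph P then letterAt P j else letterAt Q (j - alph P)
  | RegularExpression.star P, j => letterAt P j

/-- `Pos₀(α) = {0, 1, …, |α|_Σ}` as a type. -/
def Pos0 (α : RegularExpression σ) : Type _ := {i : ℕ // i ≤ alph α}

/-- The final-state set: `last(α) ∪ {0}` if `ε ∈ L(α)`, else `last(α)`. -/

noncomputable def lastZero (α : RegularExpression σ) : Set ℕ :=
  if [] ∈ α.matches' then last α ∪ {0} else last α

/-- The Glushkov position automaton of `α`. -/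
noncomputable def posNFA (α : RegularExpression σ) : NFA σ (Pos0 α) where
  step := fun i a => {j | j.1 ∈ follow α i.1 ∧ letterAt α j.1 = some a}
  start := {i | i.1 = 0}
  accept := {i | i.1 ∈ lastZero α}

/-- `E` is a right-invariant equivalence relation w.r.t. the NFA `M`:
it is an equivalence, it refines the partition `{Q∖F, F}`, and related
states have the same sets of `E`-classes of successors. -/
def RightInvariant {A Q : Type*} (M : NFA A Q) (E : Q → Q → Prop) : Prop :=
  Equivalence E ∧
  (∀ p q, E p q → (p ∈ M.accept ↔ q ∈ M.accept)) ∧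
  (∀ p q a, E p q →
    (∀ r ∈ M.step p a, ∃ s ∈ M.step q a, E r s) ∧
    (∀ s ∈ M.step q a, ∃ r ∈ M.step p a, E r s))

/-- The quotient of an NFA by an equivalence relation on its states. -/
def quotNFA {A Q : Type*} (M : NFA A Q) (s : Setoid Q) : NFA A (Quotient s) where
  step := fun x a => {y | ∃ p q, x = Quotient.mk s p ∧ y = Quotient.mk s q ∧ q ∈ M.step p a}
  start := {x | ∃ p ∈ M.start, x = Quotient.mk s p}
  accept := {x | ∃ p ∈ M.accept, x = Quotient.mk s p}

/-- The follow relation `≡_f` on `Pos₀(α)`, as a setoid. -/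
noncomputable def followSetoid (α : RegularExpression σ) : Setoid (Pos0 α) :=
  ⟨fun x y => (x.1 ∈ lastZero α ↔ y.1 ∈ lastZero α) ∧ follow α x.1 = follow α y.1,
    ⟨fun _ => ⟨Iff.rfl, rfl⟩, fun h => ⟨h.1.symm, h.2.symm⟩,
      fun h g => ⟨h.1.trans g.1, h.2.trans g.2⟩⟩⟩

/-- The follow automaton `A_f(α)`, the quotient of the position automaton by `≡_f`. -/
noncomputable def followNFA (α : RegularExpression σ) : NFA σ (Quotient (followSetoid α)) :=
  quotNFA (posNFA α) (followSetoid α)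

/-! ### Auxiliary material -/

namespace List

theorem chain'_nil {α : Type*} {R : α → α → Prop} : Chain' R [] := isChain_nil

theorem chain'_singleton {α : Type*} {R : α → α → Prop} (a : α) : Chain' R [a] :=
  isChain_singleton a

theorem chain'_cons {α : Type*} {R : α → α → Prop} {x y : α} {l : List α} :
    Chain' R (x :: y :: l) ↔ R x y ∧ Chain' R (y :: l) := isChain_cons_cons

theorem chain'_cons' {α : Type*} {R : α → α → Prop} {x : α} {l : List α} :
    Chain' R (x :: l) ↔ (∀ y ∈ head? l, R x y) ∧ Chain' R l := isChain_cons

theorem chain'_map {α β : Type*} {R : α → α → Prop} (f : β → α) {l : List β} :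
    Chain' R (map f l) ↔ Chain' (fun a b : β => R (f a) (f b)) l := isChain_map f

theorem chain'_append {α : Type*} {R : α → α → Prop} {l₁ l₂ : List α} :
    Chain' R (l₁ ++ l₂) ↔
      Chain' R l₁ ∧ Chain' R l₂ ∧ ∀ x ∈ l₁.getLast?, ∀ y ∈ l₂.head?, R x y :=
  isChain_append

end List

section NRunAux

variable {A Q : Type*}

/-- A run of an NFA from a state to a state over a word. -/
inductive NRun (M : NFA A Q) : Q → List A → Q → Prop
  | nil (q : Q) : NRun M q [] q
  | cons {q r s : Q} {a : A} {w : List A} (h : r ∈ M.step q a) (h' : NRun M r w s) :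
      NRun M q (a :: w) s

lemma mem_evalFrom_iff_nrun (M : NFA A Q) (w : List A) :
    ∀ (S : Set Q) (q : Q), q ∈ M.evalFrom S w ↔ ∃ p ∈ S, NRun M p w q := by
  induction w with
  | nil =>
    intro S q
    simp only [NFA.evalFrom_nil]
    constructor
    · intro h; exact ⟨q, h, NRun.nil q⟩
    · rintro ⟨p, hp, hrun⟩; cases hrun; exact hp
  | cons a w ih =>
    intro S q
    have : M.evalFrom S (a :: w) = M.evalFrom (M.stepSet S a) w := rfl
    rw [this, ih]
    constructor
    · rintro ⟨p, hp, hrun⟩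
      rcases M.mem_stepSet.mp hp with ⟨t, ht, hstep⟩
      exact ⟨t, ht, NRun.cons hstep hrun⟩
    · rintro ⟨p, hp, hrun⟩
      cases hrun with
      | cons hstep hrun' => exact ⟨_, M.mem_stepSet.mpr ⟨p, hp, hstep⟩, hrun'⟩

lemma mem_accepts_iff_nrun (M : NFA A Q) (w : List A) :
    w ∈ M.accepts ↔ ∃ p ∈ M.start, ∃ q ∈ M.accept, NRun M p w q := by
  rw [NFA.mem_accepts]
  constructor
  · rintro ⟨q, hq, hev⟩
    rcases (mem_evalFrom_iff_nrun M w M.start q).mp hev with ⟨p, hp, hrun⟩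
    exact ⟨p, hp, q, hq, hrun⟩
  · rintro ⟨p, hp, q, hq, hrun⟩
    exact ⟨q, hq, (mem_evalFrom_iff_nrun M w M.start q).mpr ⟨p, hp, hrun⟩⟩

/-- Quotienting by an equivalence whose classes have equal step sets and
consistent acceptance preserves the language. -/
lemma quotNFA_accepts (M : NFA A Q) (s : Setoid Q)
    (hacc : ∀ p q : Q, s.r p q → (p ∈ M.accept ↔ q ∈ M.accept))
    (hstep : ∀ (p q : Q) (a : A), s.r p q → M.step p a = M.step q a) :
    (quotNFA M s).accepts = M.accepts := by
  have lift : ∀ {p : Q} {w : List A} {q : Q}, NRun M p w q →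
      NRun (quotNFA M s) (Quotient.mk s p) w (Quotient.mk s q) := by
    intro p w q h
    induction h with
    | nil q => exact NRun.nil _
    | cons h h' ih =>
      exact NRun.cons (by exact ⟨_, _, rfl, rfl, h⟩) ih
  have descend : ∀ {x : Quotient s} {w : List A} {y : Quotient s},
      NRun (quotNFA M s) x w y → ∀ p : Q, Quotient.mk s p = x →
      ∃ q : Q, Quotient.mk s q = y ∧ NRun M p w q := by
    intro x w y h
    induction h with
    | nil q => exact fun p hp => ⟨p, hp, NRun.nil p⟩
    | cons h h' ih =>
      rename_i x r y a w
      intro p hp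
      obtain ⟨p', q', hx, hr, hq'⟩ := h
      have hrel : s.r p p' := Quotient.exact (hp.trans hx)
      have hq'' : q' ∈ M.step p a := by rw [hstep p p' a hrel]; exact hq'
      obtain ⟨q, hqy, hrun⟩ := ih q' hr.symm
      exact ⟨q, hqy, NRun.cons hq'' hrun⟩
  ext w
  rw [mem_accepts_iff_nrun, mem_accepts_iff_nrun]
  constructor
  · rintro ⟨x, ⟨p0, hp0, hx⟩, y, ⟨qa, hqa, hy⟩, hrun⟩
    obtain ⟨q, hqy, hrun'⟩ := descend hrun p0 hx.symm
    have : s.r q qa := Quotient.exact (hqy.trans hy)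
    exact ⟨p0, hp0, q, (hacc q qa this).mpr hqa, hrun'⟩
  · rintro ⟨p, hp, q, hq, hrun⟩
    exact ⟨Quotient.mk s p, ⟨p, hp, rfl⟩, Quotient.mk s q, ⟨q, hq, rfl⟩, lift hrun⟩

end NRunAux

section MarkAux

open List

/-- Shifting positions by `m`. -/
def shp (m : ℕ) (p : σ × ℕ) : σ × ℕ := (p.1, p.2 + m)

lemma mark_add (α : RegularExpression σ) :
    ∀ n m : ℕ, mark α (n + m) = (mark α n).map (shp m) := by
  induction α with
  | zero => intro n m; rfl
  | epsilon => intro n m; rfl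
  | char a =>
    intro n m
    show RegularExpression.char (a, n + m + 1) = RegularExpression.char (a, n + 1 + m)
    rw [Nat.add_right_comm]
  | plus P Q ihP ihQ =>
    intro n m
    show RegularExpression.plus _ _ = RegularExpression.plus _ _
    rw [ihP n m, Nat.add_right_comm n m (alph P), ihQ (n + alph P) m]
  | comp P Q ihP ihQ =>
    intro n m
    show RegularExpression.comp _ _ = RegularExpression.comp _ _
    rw [ihP n m, Nat.add_right_comm n m (alph P), ihQ (n + alph P) m]
  | star P ih =>
    intro n m
    show RegularExpression.star _ = RegularExpression.star _
    rw [ih n m]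

lemma matches_mark (α : RegularExpression σ) (m : ℕ) :
    (mark α m).matches' = List.map (shp m) '' (marked α).matches' := by
  have h := mark_add α 0 m
  rw [Nat.zero_add] at h
  rw [h, RegularExpression.matches'_map]
  rfl

lemma mem_marked_plus {P Q : RegularExpression σ} {w : List (σ × ℕ)} :
    w ∈ (marked (plus P Q)).matches' ↔
      w ∈ (marked P).matches' ∨ ∃ v ∈ (marked Q).matches', List.map (shp (alph P)) v = w := by
  have h : marked (plus P Q) = mark P 0 + mark Q (0 + alph P) := rfl
  rw [h, RegularExpression.matches'_add, Language.mem_add, Nat.zero_add,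
    matches_mark Q (alph P)]
  exact or_congr Iff.rfl Iff.rfl

lemma mem_marked_comp {P Q : RegularExpression σ} {w : List (σ × ℕ)} :
    w ∈ (marked (comp P Q)).matches' ↔
      ∃ u ∈ (marked P).matches', ∃ v ∈ (marked Q).matches',
        u ++ List.map (shp (alph P)) v = w := by
  have h : marked (comp P Q) = mark P 0 * mark Q (0 + alph P) := rfl
  rw [h, RegularExpression.matches'_mul, Language.mem_mul, Nat.zero_add,
    matches_mark Q (alph P)]
  constructor
  · rintro ⟨u, hu, v, hv, huv⟩
    obtain ⟨v', hv', rfl⟩ := hv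
    exact ⟨u, hu, v', hv', huv⟩
  · rintro ⟨u, hu, v, hv, huv⟩
    exact ⟨u, hu, List.map (shp (alph P)) v, ⟨v, hv, rfl⟩, huv⟩

lemma marked_star (P : RegularExpression σ) :
    (marked (RegularExpression.star P)).matches' = KStar.kstar (marked P).matches' :=
  RegularExpression.matches'_star _

/-- Positions occurring in words of `L(mark α n)` lie in `(n, n + alph α]` and
carry the letter given by `letterAt`. -/
lemma pos_bound : ∀ (α : RegularExpression σ) (n : ℕ) (w : List (σ × ℕ)),
    w ∈ (mark α n).matches' → ∀ p ∈ w,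
      n < p.2 ∧ p.2 ≤ n + alph α ∧ letterAt α (p.2 - n) = some p.1 := by
  intro α
  induction α with
  | zero => intro n w hw p hp; exact absurd hw (by simp [mark, RegularExpression.matches'_zero])
  | epsilon =>
    intro n w hw p hp
    rw [show mark (epsilon : RegularExpression σ) n = 1 from rfl,
      RegularExpression.matches'_epsilon, Language.mem_one] at hw
    subst hw; simp at hp
  | char a =>
    intro n w hw p hp
    rw [show mark (char a : RegularExpression σ) n = char (a, n + 1) from rfl,
      RegularExpression.matches'_char] at hw
    rw [hw] at hp
    simp only [List.mem_singleton] at hp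
    subst hp
    refine ⟨by omega, by simp [alph], ?_⟩
    simp [letterAt, Nat.add_sub_cancel_left]
  | plus P Q ihP ihQ =>
    intro n w hw p hp
    rw [show mark (plus P Q) n = mark P n + mark Q (n + alph P) from rfl,
      RegularExpression.matches'_add, Language.mem_add] at hw
    rcases hw with hw | hw
    · obtain ⟨h1, h2, h3⟩ := ihP n w hw p hp
      refine ⟨h1, by simp [alph]; omega, ?_⟩
      rw [show letterAt (plus P Q) (p.2 - n) = if p.2 - n ≤ alph P then letterAt P (p.2 - n)
        else letterAt Q (p.2 - n - alph P) from rfl, if_pos (by omega)]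
      exact h3
    · obtain ⟨h1, h2, h3⟩ := ihQ (n + alph P) w hw p hp
      refine ⟨by omega, by simp [alph]; omega, ?_⟩
      rw [show letterAt (plus P Q) (p.2 - n) = if p.2 - n ≤ alph P then letterAt P (p.2 - n)
        else letterAt Q (p.2 - n - alph P) from rfl, if_neg (by omega),
        show p.2 - n - alph P = p.2 - (n + alph P) by omega]
      exact h3
  | comp P Q ihP ihQ =>
    intro n w hw p hp
    rw [show mark (comp P Q) n = RegularExpression.comp (mark P n) (mark Q (n + alph P)) from rfl,
      show RegularExpression.comp (mark P n) (mark Q (n + alph P)) =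
        mark P n * mark Q (n + alph P) from rfl,
      RegularExpression.matches'_mul, Language.mem_mul] at hw
    obtain ⟨u, hu, v, hv, huv⟩ := hw
    rw [← huv, List.mem_append] at hp
    rcases hp with hp | hp
    · obtain ⟨h1, h2, h3⟩ := ihP n u hu p hp
      refine ⟨h1, by simp [alph]; omega, ?_⟩
      rw [show letterAt (comp P Q) (p.2 - n) = if p.2 - n ≤ alph P then letterAt P (p.2 - n)
        else letterAt Q (p.2 - n - alph P) from rfl, if_pos (by omega)]
      exact h3
    · obtain ⟨h1, h2, h3⟩ := ihQ (n + alph P) v hv p hp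
      refine ⟨by omega, by simp [alph]; omega, ?_⟩
      rw [show letterAt (comp P Q) (p.2 - n) = if p.2 - n ≤ alph P then letterAt P (p.2 - n)
        else letterAt Q (p.2 - n - alph P) from rfl, if_neg (by omega),
        show p.2 - n - alph P = p.2 - (n + alph P) by omega]
      exact h3
  | star P ih =>
    intro n w hw p hp
    rw [show mark (RegularExpression.star P) n = RegularExpression.star (mark P n) from rfl,
      RegularExpression.matches'_star, Language.mem_kstar] at hw
    obtain ⟨L, rfl, hL⟩ := hw
    rw [List.mem_flatten] at hp
    obtain ⟨y, hy, hpy⟩ := hp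
    have := ih n y (hL y hy) p hpy
    simpa [alph, letterAt] using this

lemma mark_fst : ∀ (α : RegularExpression σ) (n : ℕ), (mark α n).map Prod.fst = α := by
  intro α
  induction α with
  | zero => intro n; rfl
  | epsilon => intro n; rfl
  | char a => intro n; rfl
  | plus P Q ihP ihQ =>
    intro n
    show RegularExpression.plus ((mark P n).map Prod.fst) ((mark Q (n + alph P)).map Prod.fst) = _
    rw [ihP, ihQ]
  | comp P Q ihP ihQ =>
    intro n
    show RegularExpression.comp ((mark P n).map Prod.fst) ((mark Q (n + alph P)).map Prod.fst) = _
    rw [ihP, ihQ]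
  | star P ih =>
    intro n
    show RegularExpression.star ((mark P n).map Prod.fst) = _
    rw [ih]

lemma proj_marked (α : RegularExpression σ) :
    List.map Prod.fst '' (marked α).matches' = α.matches' := by
  have h := RegularExpression.matches'_map Prod.fst (marked α)
  rw [show marked α = mark α 0 from rfl, mark_fst α 0] at h
  exact h.symm

lemma nil_mem_marked_iff (α : RegularExpression σ) :
    [] ∈ (marked α).matches' ↔ [] ∈ α.matches' := by
  constructor
  · intro h
    have h2 : [] ∈ List.map Prod.fst '' (marked α).matches' := ⟨[], h, rfl⟩
    rw [proj_marked] at h2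
    exact h2
  · intro h
    rw [← proj_marked] at h
    obtain ⟨x, hx, hmap⟩ := h
    rw [List.map_eq_nil_iff] at hmap
    rwa [hmap] at hx

/-- A marked word is determined by its sequence of positions. -/
lemma eq_of_letters {α : RegularExpression σ} :
    ∀ (w w' : List (σ × ℕ)), (∀ p ∈ w, letterAt α p.2 = some p.1) →
      (∀ p ∈ w', letterAt α p.2 = some p.1) →
      List.map Prod.snd w = List.map Prod.snd w' → w = w' := by
  intro w
  induction w with
  | nil => intro w' _ _ h; simpa using (List.map_eq_nil_iff.mp h.symm)
  | cons p w ih =>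
    intro w' h1 h2 hmap
    cases w' with
    | nil => simp at hmap
    | cons q w'' =>
      simp only [List.map_cons, List.cons.injEq] at hmap
      have hp := h1 p (List.mem_cons_self)
      have hq := h2 q (List.mem_cons_self)
      rw [hmap.1] at hp
      rw [hp] at hq
      have : p.1 = q.1 := by injection hq
      have hpq : p = q := Prod.ext this hmap.1
      rw [hpq, ih w'' (fun r hr => h1 r (List.mem_cons_of_mem p hr))
        (fun r hr => h2 r (List.mem_cons_of_mem q hr)) hmap.2]

end MarkAux

section PosSets

variable {P Q : RegularExpression σ} {i j : ℕ}

lemma follow_zero (α : RegularExpression σ) : follow α 0 = first α := if_pos rfl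

lemma follow_ne (α : RegularExpression σ) (hi : i ≠ 0) :
    follow α i = {j | ∃ a b u v, (u ++ (a, i) :: (b, j) :: v) ∈ (marked α).matches'} :=
  if_neg hi

lemma letter_mem {α : RegularExpression σ} {w : List (σ × ℕ)}
    (hw : w ∈ (marked α).matches') {p : σ × ℕ} (hp : p ∈ w) :
    letterAt α p.2 = some p.1 ∧ 0 < p.2 ∧ p.2 ≤ alph α := by
  have h := pos_bound α 0 w hw p hp
  rw [Nat.sub_zero] at h
  exact ⟨h.2.2, h.1, by omega⟩

lemma first_spec (h : j ∈ first P) : 0 < j ∧ j ≤ alph P := by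
  obtain ⟨a, w, hw⟩ := h
  exact (letter_mem hw (List.mem_cons_self)).2

lemma last_spec (h : j ∈ last P) : 0 < j ∧ j ≤ alph P := by
  obtain ⟨a, w, hw⟩ := h
  exact (letter_mem hw (p := (a, j)) (by simp)).2

lemma follow_spec (hi : i ≠ 0) (h : j ∈ follow P i) :
    (0 < i ∧ i ≤ alph P) ∧ (0 < j ∧ j ≤ alph P) := by
  rw [follow_ne P hi] at h
  obtain ⟨a, b, u, v, hw⟩ := h
  exact ⟨(letter_mem hw (p := (a, i)) (by simp)).2, (letter_mem hw (p := (b, j)) (by simp)).2⟩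

lemma mem_first_char {a : σ} (h : j ∈ first (char a)) : j = 1 := by
  obtain ⟨b, w, hw⟩ := h
  rw [show marked (char a : RegularExpression σ) = RegularExpression.char (a, 1) from rfl,
    RegularExpression.matches'_char] at hw
  have h2 : (b, j) :: w = [(a, 1)] := hw
  simp only [List.cons.injEq, Prod.mk.injEq] at h2
  exact h2.1.2

lemma char_mem_marked (a : σ) : [(a, 1)] ∈ (marked (char a : RegularExpression σ)).matches' := by
  rw [show marked (char a : RegularExpression σ) = RegularExpression.char (a, 1) from rfl,
    RegularExpression.matches'_char]
  rfl

lemma not_mem_follow_char {a : σ} (hi : i ≠ 0) : j ∉ follow (char a : RegularExpression σ) i := by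
  intro h
  rw [follow_ne _ hi] at h
  obtain ⟨b, c, u, v, hw⟩ := h
  rw [show marked (char a : RegularExpression σ) = RegularExpression.char (a, 1) from rfl,
    RegularExpression.matches'_char] at hw
  have h2 : u ++ (b, i) :: (c, j) :: v = [(a, 1)] := hw
  have := congrArg List.length h2
  simp at this
  omega

lemma shp_map_eq_cons {m : ℕ} {v : List (σ × ℕ)} {a : σ} {w : List (σ × ℕ)}
    (h : List.map (shp m) v = (a, j) :: w) :
    ∃ j' v', v = (a, j') :: v' ∧ j = j' + m ∧ List.map (shp m) v' = w := by
  rcases List.map_eq_cons_iff.mp h with ⟨⟨b, j'⟩, v', rfl, hp, hv'⟩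
  have hb : b = a ∧ j' + m = j := by
    simpa [shp, Prod.ext_iff] using hp
  exact ⟨j', v', by rw [hb.1], hb.2.symm, hv'⟩

lemma mem_first_plus (h : j ∈ first (plus P Q)) :
    j ∈ first P ∨ ∃ j' ∈ first Q, j = j' + alph P := by
  obtain ⟨a, w, hw⟩ := h
  rcases mem_marked_plus.mp hw with h | ⟨v, hv, hmap⟩
  · exact Or.inl ⟨a, w, h⟩
  · obtain ⟨j', v', rfl, rfl, _⟩ := shp_map_eq_cons hmap
    exact Or.inr ⟨j', ⟨a, v', hv⟩, rfl⟩

lemma mem_last_plus (h : j ∈ last (plus P Q)) :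
    j ∈ last P ∨ ∃ j' ∈ last Q, j = j' + alph P := by
  obtain ⟨a, w, hw⟩ := h
  rcases mem_marked_plus.mp hw with h | ⟨v, hv, hmap⟩
  · exact Or.inl ⟨a, w, h⟩
  · rcases List.map_eq_append_iff.mp hmap with ⟨l1, l2, rfl, h1, h2⟩
    obtain ⟨j', l2', rfl, rfl, h3⟩ := shp_map_eq_cons h2
    rw [List.map_eq_nil_iff.mp h3] at hv
    exact Or.inr ⟨j', ⟨a, l1, hv⟩, rfl⟩

lemma mem_follow_plus (hi : i ≠ 0) (h : j ∈ follow (plus P Q) i) :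
    j ∈ follow P i ∨
      ∃ i' j' : ℕ, 0 < i' ∧ j' ∈ follow Q i' ∧ i = i' + alph P ∧ j = j' + alph P := by
  rw [follow_ne _ hi] at h
  obtain ⟨a, b, u, v, hw⟩ := h
  rcases mem_marked_plus.mp hw with h | ⟨x, hx, hmap⟩
  · exact Or.inl (by rw [follow_ne P hi]; exact ⟨a, b, u, v, h⟩)
  · rcases List.map_eq_append_iff.mp hmap with ⟨x1, x2, rfl, h1, h2⟩
    obtain ⟨i', x2', rfl, rfl, h3⟩ := shp_map_eq_cons h2
    obtain ⟨j', x2'', rfl, rfl, h4⟩ := shp_map_eq_cons h3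
    have hi' : 0 < i' := (letter_mem hx (p := (a, i')) (by simp)).2.1
    refine Or.inr ⟨i', j', hi', ?_, rfl, rfl⟩
    rw [follow_ne Q (by omega)]
    exact ⟨a, b, x1, x2'', hx⟩

lemma mem_first_comp (h : j ∈ first (comp P Q)) :
    j ∈ first P ∨ ([] ∈ P.matches' ∧ ∃ j' ∈ first Q, j = j' + alph P) := by
  obtain ⟨a, w, hw⟩ := h
  obtain ⟨u, hu, v, hv, huv⟩ := mem_marked_comp.mp hw
  cases u with
  | nil =>
    rw [List.nil_append] at huv
    obtain ⟨j', v', rfl, rfl, _⟩ := shp_map_eq_cons huv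
    exact Or.inr ⟨(nil_mem_marked_iff P).mp hu, j', ⟨a, v', hv⟩, rfl⟩
  | cons p u' =>
    have hp : p = (a, j) := by
      have := congrArg List.head? huv
      simpa using this
    rw [hp] at hu
    exact Or.inl ⟨a, u', hu⟩

lemma mem_last_comp (h : j ∈ last (comp P Q)) :
    (∃ j' ∈ last Q, j = j' + alph P) ∨ ([] ∈ Q.matches' ∧ j ∈ last P) := by
  obtain ⟨a, w, hw⟩ := h
  obtain ⟨u, hu, v, hv, huv⟩ := mem_marked_comp.mp hw
  rcases v.eq_nil_or_concat' with rfl | ⟨v0, p, rfl⟩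
  · simp only [List.map_nil, List.append_nil] at huv
    rw [huv] at hu
    exact Or.inr ⟨(nil_mem_marked_iff Q).mp hv, ⟨a, w, hu⟩⟩
  · rcases p with ⟨b, j'⟩
    rw [List.map_append] at huv
    have hlast := congrArg List.getLast? huv
    rw [← List.append_assoc] at hlast
    simp only [List.getLast?_concat, List.map_cons, List.map_nil, shp] at hlast
    have hbj : b = a ∧ j' + alph P = j := by
      simpa [Prod.ext_iff] using hlast
    exact Or.inl ⟨j', ⟨b, v0, hv⟩, hbj.2.symm⟩

/-- Splitting a list around two marked consecutive elements. -/
lemma two_split {γ : Type*} {u v u' v' : List γ} {x y : γ}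
    (h : u ++ x :: y :: v = u' ++ v') :
    (∃ t, u' = u ++ x :: y :: t ∧ v = t ++ v') ∨
    (u' = u ++ [x] ∧ v' = y :: v) ∨
    (∃ t, u = u' ++ t ∧ v' = t ++ x :: y :: v) := by
  rcases List.append_eq_append_iff.mp h with ⟨e, he1, he2⟩ | ⟨e, he1, he2⟩
  · -- u' = u ++ e, x :: y :: v = e ++ v'
    cases e with
    | nil =>
      right; right
      exact ⟨[], by simpa using he1.symm, by simpa using he2.symm⟩
    | cons z e' =>
      cases e' with
      | nil =>
        right; left
        simp only [List.cons_append, List.nil_append, List.cons.injEq] at he2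
        refine ⟨by rw [he1, he2.1], he2.2.symm⟩
      | cons z' e'' =>
        left
        simp only [List.cons_append, List.cons.injEq] at he2
        exact ⟨e'', by rw [he1, he2.1, he2.2.1], he2.2.2⟩
  · right; right
    exact ⟨e, he1, he2⟩

lemma mem_follow_comp (hi : i ≠ 0) (h : j ∈ follow (comp P Q) i) :
    j ∈ follow P i ∨
      (i ∈ last P ∧ ∃ j' ∈ first Q, j = j' + alph P) ∨
      ∃ i' j' : ℕ, 0 < i' ∧ j' ∈ follow Q i' ∧ i = i' + alph P ∧ j = j' + alph P := by
  rw [follow_ne _ hi] at h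
  obtain ⟨a, b, u, v, hw⟩ := h
  obtain ⟨u', hu', v', hv', huv⟩ := mem_marked_comp.mp hw
  rcases two_split huv.symm with ⟨t, ht1, ht2⟩ | ⟨h1, h2⟩ | ⟨t, ht1, ht2⟩
  · rw [ht1] at hu'
    exact Or.inl (by rw [follow_ne P hi]; exact ⟨a, b, u, t, hu'⟩)
  · rw [h1] at hu'
    obtain ⟨j', v'', rfl, rfl, _⟩ := shp_map_eq_cons h2
    exact Or.inr (Or.inl ⟨⟨a, u, hu'⟩, j', ⟨b, v'', hv'⟩, rfl⟩)
  · rcases List.map_eq_append_iff.mp ht2 with ⟨x1, x2, rfl, h1, h2⟩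
    obtain ⟨i', x2', rfl, rfl, h3⟩ := shp_map_eq_cons h2
    obtain ⟨j', x2'', rfl, rfl, h4⟩ := shp_map_eq_cons h3
    have hi' : 0 < i' := (letter_mem hv' (p := (a, i')) (by simp)).2.1
    refine Or.inr (Or.inr ⟨i', j', hi', ?_, rfl, rfl⟩)
    rw [follow_ne Q (by omega)]
    exact ⟨a, b, x1, x2'', hv'⟩

lemma flatten_two {γ : Type*} {S : Set (List γ)} :
    ∀ (L : List (List γ)) (u v : List γ) (x y : γ),
      u ++ x :: y :: v = L.flatten → (∀ l ∈ L, l ∈ S ∧ l ≠ []) →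
      (∃ l ∈ S, ∃ u1 v1, l = u1 ++ x :: y :: v1) ∨
      (∃ l1 ∈ S, ∃ l2 ∈ S, (∃ u1, l1 = u1 ++ [x]) ∧ ∃ v1, l2 = y :: v1) := by
  intro L
  induction L with
  | nil =>
    intro u v x y h _
    exact absurd h (by simp)
  | cons l L' ih =>
    intro u v x y h hS
    rw [List.flatten_cons] at h
    rcases two_split h with ⟨t, ht1, ht2⟩ | ⟨h1, h2⟩ | ⟨t, ht1, ht2⟩
    · exact Or.inl ⟨l, (hS l (by simp)).1, u, t, ht1⟩
    · -- l ends with x, the next nonempty block starts with y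
      cases L' with
      | nil => simp at h2
      | cons l2 L'' =>
        rw [List.flatten_cons] at h2
        cases hl2 : l2 with
        | nil => exact absurd hl2 (hS l2 (by simp)).2
        | cons z l2' =>
          rw [hl2] at h2
          simp only [List.cons_append, List.cons.injEq] at h2
          refine Or.inr ⟨l, (hS l (by simp)).1, l2, (hS l2 (by simp)).1, ⟨u, h1⟩,
            l2', by rw [hl2, h2.1]⟩
    · exact ih t v x y ht2.symm (fun l' hl' => hS l' (List.mem_cons_of_mem _ hl'))

lemma mem_first_star (h : j ∈ first (RegularExpression.star P)) : j ∈ first P := by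
  obtain ⟨a, w, hw⟩ := h
  rw [marked_star] at hw
  rcases Language.mem_kstar_iff_exists_nonempty.mp hw with ⟨S, hflat, hS⟩
  cases S with
  | nil => simp at hflat
  | cons l S' =>
    have hl := hS l (by simp)
    cases hl2 : l with
    | nil => exact absurd hl2 hl.2
    | cons p l' =>
      rw [List.flatten_cons, hl2] at hflat
      simp only [List.cons_append, List.cons.injEq] at hflat
      rw [hl2, ← hflat.1] at hl
      exact ⟨a, l', hl.1⟩

lemma mem_last_star (h : j ∈ last (RegularExpression.star P)) : j ∈ last P := by
  obtain ⟨a, w, hw⟩ := h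
  rw [marked_star] at hw
  rcases Language.mem_kstar_iff_exists_nonempty.mp hw with ⟨S, hflat, hS⟩
  rcases S.eq_nil_or_concat' with rfl | ⟨S0, l, rfl⟩
  · exact absurd hflat (by simp)
  · have hl := hS l (by simp)
    rcases l.eq_nil_or_concat' with rfl | ⟨l0, p, rfl⟩
    · exact absurd rfl hl.2
    · have : (S0 ++ [l0 ++ [p]]).flatten = S0.flatten ++ l0 ++ [p] := by
        simp [List.flatten_append]
      rw [this] at hflat
      have hp : p = (a, j) := by
        have := congrArg List.getLast? hflat
        simpa [List.getLast?_concat] using this.symm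
      rw [hp] at hl
      exact ⟨a, l0, hl.1⟩

lemma mem_follow_star (hi : i ≠ 0) (h : j ∈ follow (RegularExpression.star P) i) :
    j ∈ follow P i ∨ (i ∈ last P ∧ j ∈ first P) := by
  rw [follow_ne _ hi] at h
  obtain ⟨a, b, u, v, hw⟩ := h
  rw [marked_star] at hw
  rcases Language.mem_kstar_iff_exists_nonempty.mp hw with ⟨S, hflat, hS⟩
  rcases flatten_two S u v (a, i) (b, j) hflat (fun l hl => hS l hl) with
    ⟨l, hlS, u1, v1, rfl⟩ | ⟨l1, h1, l2, h2, ⟨u1, rfl⟩, v1, rfl⟩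
  · exact Or.inl (by rw [follow_ne P hi]; exact ⟨a, b, u1, v1, hlS⟩)
  · exact Or.inr ⟨⟨a, u1, h1⟩, ⟨b, v1, h2⟩⟩

end PosSets

section ChainAux

lemma chain_all {R : ℕ → ℕ → Prop} {I : ℕ → Prop} (hstep : ∀ i j, I i → R i j → I j) :
    ∀ (j : ℕ) (js : List ℕ), I j → List.Chain' R (j :: js) → ∀ k ∈ j :: js, I k := by
  intro j js
  induction js generalizing j with
  | nil =>
    intro hI _ k hk
    simp only [List.mem_singleton] at hk
    rwa [hk]
  | cons j2 js ih =>
    intro hI hch k hk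
    rw [List.chain'_cons] at hch
    rcases List.mem_cons.mp hk with rfl | hk
    · exact hI
    · exact ih j2 (hstep _ _ hI hch.1) hch.2 k hk

lemma chain_transfer {R S : ℕ → ℕ → Prop} {I : ℕ → Prop}
    (hstep : ∀ i j, I i → R i j → I j) (himp : ∀ i j, I i → R i j → S i j) :
    ∀ (j : ℕ) (js : List ℕ), I j → List.Chain' R (j :: js) → List.Chain' S (j :: js) := by
  intro j js
  induction js generalizing j with
  | nil => intro _ _; exact List.chain'_singleton j
  | cons j2 js ih =>
    intro hI hch
    rw [List.chain'_cons] at hch ⊢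
    exact ⟨himp _ _ hI hch.1, ih j2 (hstep _ _ hI hch.1) hch.2⟩

lemma chain_split {R : ℕ → ℕ → Prop} (C : ℕ → Prop)
    (hprop : ∀ i j, ¬ C i → R i j → ¬ C j) :
    ∀ js : List ℕ, List.Chain' R js →
      ∃ ks ls, js = ks ++ ls ∧ (∀ k ∈ ks, C k) ∧ (∀ l ∈ ls, ¬ C l) := by
  intro js
  induction js with
  | nil => exact fun _ => ⟨[], [], rfl, by simp, by simp⟩
  | cons j js ih =>
    intro hch
    by_cases hj : C j
    · obtain ⟨ks, ls, heq, h1, h2⟩ := ih hch.tail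
      refine ⟨j :: ks, ls, by rw [List.cons_append, heq], ?_, h2⟩
      intro k hk
      rcases List.mem_cons.mp hk with rfl | hk
      · exact hj
      · exact h1 k hk
    · exact ⟨[], j :: js, rfl, by simp, chain_all hprop j js hj hch⟩

/-- Decomposing a chain for `follow(P*)` into blocks for `P`. -/
lemma star_decomp {P : RegularExpression σ} :
    ∀ js : List ℕ, js ≠ [] →
      List.Chain' (fun i j => j ∈ follow P i ∨ (i ∈ last P ∧ j ∈ first P)) js →
      (∀ jn ∈ js.getLast?, jn ∈ last P) →
      ∃ bs : List (List ℕ), js = bs.flatten ∧ bs ≠ [] ∧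
        (∀ b ∈ bs, b ≠ [] ∧ List.Chain' (fun i j => j ∈ follow P i) b ∧
          (∀ l ∈ b.getLast?, l ∈ last P)) ∧
        (∀ b ∈ bs.tail, ∀ h ∈ b.head?, h ∈ first P) := by
  intro js
  induction js with
  | nil => intro h; exact absurd rfl h
  | cons j rest ih =>
    intro _ hch hlast
    cases rest with
    | nil =>
      refine ⟨[[j]], by simp, by simp, ?_, by simp⟩
      intro b hb
      simp only [List.mem_singleton] at hb
      subst hb
      exact ⟨by simp, List.chain'_singleton j, by simpa using hlast⟩
    | cons j2 rest2 =>
      rw [List.chain'_cons] at hch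
      have hlast' : ∀ jn ∈ (j2 :: rest2).getLast?, jn ∈ last P := by
        intro jn hjn
        exact hlast jn (by rwa [List.getLast?_cons_cons])
      obtain ⟨bs, hflat, hbs0, hbs1, hbs2⟩ := ih (by simp) hch.2 hlast'
      rcases hch.1 with hfol | ⟨hl, hf2⟩
      · -- extend the first block
        cases bs with
        | nil => exact absurd rfl hbs0
        | cons b bs' =>
          have hb := hbs1 b (by simp)
          cases b with
          | nil => exact absurd rfl hb.1
          | cons bh bt =>
            rw [List.flatten_cons, List.cons_append] at hflat
            injection hflat with hj2 hrest
            subst hj2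
            refine ⟨(j :: j2 :: bt) :: bs', ?_, by simp, ?_, ?_⟩
            · rw [List.flatten_cons, List.cons_append, List.cons_append, hrest]
            · intro b' hb'
              rcases List.mem_cons.mp hb' with rfl | hb'
              · refine ⟨by simp, List.chain'_cons.mpr ⟨hfol, hb.2.1⟩, ?_⟩
                intro l hl2
                exact hb.2.2 l (by rwa [List.getLast?_cons_cons] at hl2)
              · exact hbs1 b' (List.mem_cons_of_mem _ hb')
            · intro b' hb'
              exact hbs2 b' hb'
      · -- start a new block
        refine ⟨[j] :: bs, ?_, by simp, ?_, ?_⟩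
        · rw [List.flatten_cons, ← hflat]; rfl
        · intro b hb
          rcases List.mem_cons.mp hb with rfl | hb
          · exact ⟨by simp, List.chain'_singleton j, by simpa using hl⟩
          · exact hbs1 b hb
        · intro b hb hd hhd
          cases bs with
          | nil => exact absurd rfl hbs0
          | cons b0 bs' =>
            rcases List.mem_cons.mp hb with rfl | hb2
            · -- head of b is j2
              have hb0 := hbs1 b (by simp)
              cases b with
              | nil => exact absurd rfl hb0.1
              | cons b0h b0t =>
                rw [List.flatten_cons, List.cons_append] at hflat
                injection hflat with hj2 _
                simp only [List.head?_cons, Option.mem_def, Option.some_inj] at hhd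
                rw [← hhd, ← hj2]
                exact hf2
            · exact hbs2 b (by simpa using hb2) hd hhd

lemma chain'_imp_of_mem {γ : Type*} {R S : γ → γ → Prop} :
    ∀ l : List γ, List.Chain' R l → (∀ i ∈ l, ∀ j ∈ l, R i j → S i j) → List.Chain' S l := by
  intro l
  induction l with
  | nil => intro _ _; exact List.chain'_nil
  | cons a l ih =>
    intro hch h
    rw [List.chain'_cons'] at hch ⊢
    constructor
    · intro y hy
      exact h a (by simp) y (List.mem_cons_of_mem _ (List.mem_of_mem_head? hy)) (hch.1 y hy)
    · exact ih hch.2 fun i hi j hj hij =>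
        h i (List.mem_cons_of_mem _ hi) j (List.mem_cons_of_mem _ hj) hij

end ChainAux

/-- The main Glushkov reconstruction lemma: a position sequence satisfying the
local conditions comes from a word of the marked language. -/
lemma glushkov_main : ∀ (α : RegularExpression σ) (js : List ℕ) (j1 jn : ℕ),
    js.head? = some j1 → js.getLast? = some jn →
    j1 ∈ first α → jn ∈ last α →
    List.Chain' (fun i j => j ∈ follow α i) js →
    ∃ x ∈ (marked α).matches', List.map Prod.snd x = js := by
  intro α
  induction α with
  | zero =>
    intro js j1 jn h1 h2 hf hl hch
    obtain ⟨h01, h02⟩ := first_spec hf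
    rw [show alph (zero : RegularExpression σ) = 0 from rfl] at h02
    omega
  | epsilon =>
    intro js j1 jn h1 h2 hf hl hch
    obtain ⟨h01, h02⟩ := first_spec hf
    rw [show alph (epsilon : RegularExpression σ) = 0 from rfl] at h02
    omega
  | char a =>
    intro js j1 jn h1 h2 hf hl hch
    have hj1 : j1 = 1 := mem_first_char hf
    cases js with
    | nil => simp at h1
    | cons j js' =>
      have hjj : j1 = j := by simpa using h1.symm
      subst hjj
      cases js' with
      | nil => exact ⟨[(a, 1)], char_mem_marked a, by simp [hj1]⟩
      | cons j2 js'' =>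
        rw [List.chain'_cons] at hch
        exact absurd hch.1 (not_mem_follow_char (by omega))
  | plus P Q ihP ihQ =>
    intro js j1 jn h1 h2 hf hl hch
    cases js with
    | nil => simp at h1
    | cons j js' =>
      have hjj : j1 = j := by simpa using h1.symm
      subst hjj
      rcases mem_first_plus hf with hfP | ⟨j1', hfQ, rfl⟩
      · -- the whole word lives in P
        have hstep : ∀ i k, (0 < i ∧ i ≤ alph P) → k ∈ follow (plus P Q) i →
            (0 < k ∧ k ≤ alph P) := by
          intro i k hi hk
          rcases mem_follow_plus (by omega) hk with h | ⟨i', k', hi', _, rfl, _⟩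
          · exact (follow_spec (by omega) h).2
          · omega
        have himp : ∀ i k, (0 < i ∧ i ≤ alph P) → k ∈ follow (plus P Q) i →
            k ∈ follow P i := by
          intro i k hi hk
          rcases mem_follow_plus (by omega) hk with h | ⟨i', k', hi', _, rfl, _⟩
          · exact h
          · omega
        have hchP := chain_transfer hstep himp j1 js' (first_spec hfP) hch
        have hallP := chain_all hstep j1 js' (first_spec hfP) hch
        have hjn : jn ∈ last P := by
          rcases mem_last_plus hl with h | ⟨j', hj', rfl⟩
          · exact h
          · have h3 := hallP _ (List.mem_of_getLast? h2)
            have h4 := (last_spec hj').1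
            omega
        obtain ⟨x, hx, hxs⟩ := ihP (j1 :: js') j1 jn (by simp) h2 hfP hjn hchP
        exact ⟨x, mem_marked_plus.mpr (Or.inl hx), hxs⟩
      · -- the whole word lives in Q, shifted by alph P
        have hj1' := first_spec hfQ
        have hstep : ∀ i k, (alph P < i ∧ i ≤ alph P + alph Q) → k ∈ follow (plus P Q) i →
            (alph P < k ∧ k ≤ alph P + alph Q) := by
          intro i k hi hk
          rcases mem_follow_plus (by omega) hk with h | ⟨i', k', hi', hkQ, rfl, rfl⟩
          · have := (follow_spec (by omega) h).1.2; omega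
          · have := (follow_spec (by omega) hkQ).2; omega
        have himp : ∀ i k, (alph P < i ∧ i ≤ alph P + alph Q) → k ∈ follow (plus P Q) i →
            (k - alph P) ∈ follow Q (i - alph P) := by
          intro i k hi hk
          rcases mem_follow_plus (by omega) hk with h | ⟨i', k', hi', hkQ, rfl, rfl⟩
          · exact absurd (follow_spec (by omega) h).1.2 (by omega)
          · simpa [Nat.add_sub_cancel] using hkQ
        have hchain := chain_transfer hstep himp (j1' + alph P) js'
          ⟨by omega, by have := hj1'.2; omega⟩ hch
        have hall := chain_all hstep (j1' + alph P) js'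
          ⟨by omega, by have := hj1'.2; omega⟩ hch
        have hchQ : List.Chain' (fun i k => k ∈ follow Q i)
            (List.map (· - alph P) ((j1' + alph P) :: js')) := by
          rw [List.chain'_map]
          exact hchain
        have hjnQ : jn - alph P ∈ last Q := by
          rcases mem_last_plus hl with h | ⟨j', hj', rfl⟩
          · have h3 := hall _ (List.mem_of_getLast? h2)
            have h4 := (last_spec h).2
            omega
          · simpa [Nat.add_sub_cancel] using hj'
        obtain ⟨x, hx, hxs⟩ := ihQ (List.map (· - alph P) ((j1' + alph P) :: js'))
          j1' (jn - alph P)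
          (by simp) (by rw [List.getLast?_map, h2]; rfl) hfQ hjnQ hchQ
        refine ⟨List.map (shp (alph P)) x, mem_marked_plus.mpr (Or.inr ⟨x, hx, rfl⟩), ?_⟩
        rw [List.map_map, show Prod.snd ∘ shp (alph P) = (· + alph P) ∘ Prod.snd from rfl,
          ← List.map_map, hxs, List.map_map]
        conv_rhs => rw [← List.map_id ((j1' + alph P) :: js')]
        apply List.map_congr_left
        intro k hk
        have := hall k hk
        simp only [Function.comp_apply, id_eq]
        omega
  | comp P Q ihP ihQ =>
    intro js j1 jn h1 h2 hf hl hch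
    cases js with
    | nil => simp at h1
    | cons j js' =>
      have hjj : j1 = j := by simpa using h1.symm
      subst hjj
      have halph : alph (comp P Q) = alph P + alph Q := rfl
      have hpos : ∀ k ∈ j1 :: js', 0 < k ∧ k ≤ alph P + alph Q := by
        refine chain_all (I := fun k => 0 < k ∧ k ≤ alph P + alph Q) ?_ j1 js' ?_ hch
        · intro i k hi hk
          have := (follow_spec (P := comp P Q) (by omega) hk).2
          rw [halph] at this
          exact this
        · have := first_spec hf
          rw [halph] at this
          exact this
      have hprop : ∀ i k, ¬ (i ≤ alph P) → k ∈ follow (comp P Q) i → ¬ (k ≤ alph P) := by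
        intro i k hi hk
        rcases mem_follow_comp (by omega) hk with h | ⟨hlP, j', hj', rfl⟩ |
          ⟨i', k', hi', hkQ, rfl, rfl⟩
        · exact absurd (follow_spec (by omega) h).1.2 hi
        · exact absurd (last_spec hlP).2 hi
        · have := (follow_spec (by omega) hkQ).2.1
          omega
      obtain ⟨ks, ls, hsplit, hks, hls⟩ :=
        chain_split (fun k => k ≤ alph P) hprop (j1 :: js') hch
      have hch2 : List.Chain' (fun i k => k ∈ follow (comp P Q) i) (ks ++ ls) := by
        rw [← hsplit]; exact hch
      rw [List.chain'_append] at hch2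
      obtain ⟨hchks, hchls, hbnd⟩ := hch2
      -- transfer the chain on ks to P
      have hchksP : List.Chain' (fun i k => k ∈ follow P i) ks := by
        refine chain'_imp_of_mem ks hchks ?_
        intro i hi k hk hik
        have hi2 : 0 < i := (hpos i (by rw [hsplit]; exact List.mem_append_left _ hi)).1
        rcases mem_follow_comp (by omega) hik with h | ⟨_, j', hj', rfl⟩ |
          ⟨i', k', hi', _, rfl, _⟩
        · exact h
        · exact absurd (hks _ hk) (by have := (first_spec hj').1; omega)
        · exact absurd (hks _ hi) (by omega)
      -- transfer the chain on ls to Q (shifted)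
      have hchlsQ : List.Chain' (fun i k => k ∈ follow Q i) (List.map (· - alph P) ls) := by
        rw [List.chain'_map]
        refine chain'_imp_of_mem ls hchls ?_
        intro i hi k hk hik
        have hi2 : ¬ i ≤ alph P := hls _ hi
        rcases mem_follow_comp (by omega) hik with h | ⟨hlP, j', hj', rfl⟩ |
          ⟨i', k', hi', hkQ, rfl, rfl⟩
        · exact absurd (follow_spec (by omega) h).1.2 hi2
        · exact absurd (last_spec hlP).2 hi2
        · simpa [Nat.add_sub_cancel] using hkQ
      cases ls with
      | nil =>
        -- everything in P, and ε ∈ L(Q)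
        rw [List.append_nil] at hsplit
        have hjn : jn ∈ last P ∧ [] ∈ Q.matches' := by
          rcases mem_last_comp hl with ⟨j', hj', rfl⟩ | ⟨hQ, hP⟩
          · have := hks _ (by rw [← hsplit]; exact List.mem_of_getLast? h2)
            have := (last_spec hj').1
            omega
          · exact ⟨hP, hQ⟩
        have hfP : j1 ∈ first P := by
          rcases mem_first_comp hf with h | ⟨_, j', hj', rfl⟩
          · exact h
          · have := hks (j' + alph P) (by rw [← hsplit]; simp)
            have := (first_spec hj').1
            omega
        rw [← hsplit] at hchksP
        obtain ⟨x, hx, hxs⟩ := ihP (j1 :: js') j1 jn (by simp) h2 hfP hjn.1 hchksP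
        refine ⟨x ++ List.map (shp (alph P)) [],
          mem_marked_comp.mpr ⟨x, hx, [], (nil_mem_marked_iff Q).mpr hjn.2, rfl⟩, ?_⟩
        simp [hxs]
      | cons l0 ls' =>
        -- the Q part is nonempty
        have hlsne : (l0 :: ls') ≠ [] := by simp
        have hjnls : jn = ((l0 :: ls').getLast (by simp)) := by
          have := List.getLast?_append_of_ne_nil ks (l₂ := l0 :: ls') hlsne
          rw [← hsplit, h2, List.getLast?_eq_getLast hlsne] at this
          exact Option.some_inj.mp this
        have hjnmem : jn ∈ (l0 :: ls') := by
          rw [hjnls]; exact List.getLast_mem _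
        have hjnQ : jn - alph P ∈ last Q := by
          rcases mem_last_comp hl with ⟨j', hj', rfl⟩ | ⟨_, hP⟩
          · simpa [Nat.add_sub_cancel] using hj'
          · exact absurd (last_spec hP).2 (hls _ hjnmem)
        have hlastmap : (List.map (· - alph P) (l0 :: ls')).getLast? = some (jn - alph P) := by
          rw [List.getLast?_map, List.getLast?_eq_getLast hlsne, ← hjnls]
          rfl
        cases ks with
        | nil =>
          -- everything in Q, and ε ∈ L(P)
          rw [List.nil_append] at hsplit
          obtain ⟨hεP, j1', hj1', hj1eq⟩ : [] ∈ P.matches' ∧ ∃ j' ∈ first Q, j1 = j' + alph P := by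
            rcases mem_first_comp hf with h | h
            · have := (first_spec h).2
              have := hls j1 (by rw [← hsplit]; simp)
              omega
            · exact h
          have hl0 : l0 = j1 := by
            have := congrArg List.head? hsplit
            simpa using this.symm
          obtain ⟨x, hx, hxs⟩ := ihQ (List.map (· - alph P) (l0 :: ls')) (l0 - alph P)
            (jn - alph P) (by simp) hlastmap
            (by rw [hl0, hj1eq]; simpa [Nat.add_sub_cancel] using hj1') hjnQ hchlsQ
          refine ⟨[] ++ List.map (shp (alph P)) x,
            mem_marked_comp.mpr ⟨[], (nil_mem_marked_iff P).mpr hεP, x, hx, rfl⟩, ?_⟩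
          rw [List.nil_append, List.map_map,
            show Prod.snd ∘ shp (alph P) = (· + alph P) ∘ Prod.snd from rfl,
            ← List.map_map, hxs, List.map_map, hsplit]
          conv_rhs => rw [← List.map_id (l0 :: ls')]
          apply List.map_congr_left
          intro k hk
          have := hls k hk
          simp only [Function.comp_apply, id_eq]
          omega
        | cons k0 ks' =>
          -- both parts nonempty
          have hk0 : k0 = j1 := by
            have := congrArg List.head? hsplit
            simpa using this.symm
          have hksne : (k0 :: ks') ≠ [] := by simp
          have hfP : j1 ∈ first P := by
            rcases mem_first_comp hf with h | ⟨_, j', hj', rfl⟩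
            · exact h
            · have := hks k0 (by simp)
              have := (first_spec hj').1
              omega
          -- the boundary pair
          obtain ⟨gk, hgk?⟩ : ∃ g, (k0 :: ks').getLast? = some g :=
            ⟨_, List.getLast?_eq_getLast hksne⟩
          have hbnd2 := hbnd gk hgk? l0 rfl
          have hgkmem : gk ∈ (k0 :: ks') := List.mem_of_getLast? hgk?
          obtain ⟨hgkP, l0', hl0', hl0eq⟩ :
              gk ∈ last P ∧ ∃ j' ∈ first Q, l0 = j' + alph P := by
            rcases mem_follow_comp (P := P) (Q := Q)
                (by have := (hpos gk (by rw [hsplit]; exact List.mem_append_left _ hgkmem)).1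
                    omega) hbnd2 with h | ⟨h1', h2'⟩ | ⟨i', k', hi', _, rfl, rfl⟩
            · exact absurd (follow_spec (by
                have := (hpos gk (by rw [hsplit]; exact List.mem_append_left _ hgkmem)).1
                omega) h).2.2 (by have := hls l0 (by simp); omega)
            · exact ⟨h1', h2'⟩
            · exact absurd (hks _ hgkmem) (by omega)
          obtain ⟨xP, hxP, hxPs⟩ := ihP (k0 :: ks') k0 gk (by simp) hgk?
            (by rw [hk0]; exact hfP) hgkP hchksP
          obtain ⟨xQ, hxQ, hxQs⟩ := ihQ (List.map (· - alph P) (l0 :: ls')) (l0 - alph P)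
            (jn - alph P) (by simp) hlastmap
            (by rw [hl0eq]; simpa [Nat.add_sub_cancel] using hl0') hjnQ hchlsQ
          refine ⟨xP ++ List.map (shp (alph P)) xQ,
            mem_marked_comp.mpr ⟨xP, hxP, xQ, hxQ, rfl⟩, ?_⟩
          rw [List.map_append, hxPs, List.map_map,
            show Prod.snd ∘ shp (alph P) = (· + alph P) ∘ Prod.snd from rfl,
            ← List.map_map, hxQs, List.map_map, hsplit]
          congr 1
          conv_rhs => rw [← List.map_id (l0 :: ls')]
          apply List.map_congr_left
          intro k hk
          have := hls k hk
          simp only [Function.comp_apply, id_eq]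
          omega
  | star P ihP =>
    intro js j1 jn h1 h2 hf hl hch
    cases js with
    | nil => simp at h1
    | cons j js' =>
      have hjj : j1 = j := by simpa using h1.symm
      subst hjj
      have hfP : j1 ∈ first P := mem_first_star hf
      have hlP : jn ∈ last P := mem_last_star hl
      have hstep : ∀ i k, 0 < i → k ∈ follow (RegularExpression.star P) i → 0 < k :=
        fun i k hi hk => (follow_spec (by omega) hk).2.1
      have himp : ∀ i k, 0 < i → k ∈ follow (RegularExpression.star P) i →
          (k ∈ follow P i ∨ (i ∈ last P ∧ k ∈ first P)) :=
        fun i k hi hk => mem_follow_star (by omega) hk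
      have hch2 := chain_transfer hstep himp j1 js' (first_spec hf).1 hch
      obtain ⟨bs, hflat, hbs0, hbs1, hbs2⟩ := star_decomp (j1 :: js') (by simp) hch2
        (by intro l hl2; rw [h2] at hl2; obtain rfl := Option.some_inj.mp hl2; exact hlP)
      have hhead : ∀ b ∈ bs, ∀ h ∈ b.head?, h ∈ first P := by
        cases bs with
        | nil => exact absurd rfl hbs0
        | cons b0 bs' =>
          intro b hb
          rcases List.mem_cons.mp hb with rfl | hb
          · intro hd hhd
            have hb0ne := (hbs1 b (by simp)).1
            cases b with
            | nil => exact absurd rfl hb0ne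
            | cons bh bt =>
              rw [List.flatten_cons, List.cons_append] at hflat
              injection hflat with hj hrest
              simp only [List.head?_cons, Option.mem_def, Option.some_inj] at hhd
              rw [← hhd, ← hj]
              exact hfP
          · exact hbs2 b (by simpa using hb)
      have hbuild : ∀ bs' : List (List ℕ),
          (∀ b ∈ bs', b ≠ [] ∧ List.Chain' (fun i k => k ∈ follow P i) b ∧
            (∀ l ∈ b.getLast?, l ∈ last P) ∧ (∀ h ∈ b.head?, h ∈ first P)) →
          ∃ xs : List (List (σ × ℕ)), (∀ x ∈ xs, x ∈ (marked P).matches') ∧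
            List.map (List.map Prod.snd) xs = bs' := by
        intro bs'
        induction bs' with
        | nil => exact fun _ => ⟨[], by simp, by simp⟩
        | cons b bs'' ih =>
          intro hb
          obtain ⟨hne, hchb, hlstb, hhdb⟩ := hb b (by simp)
          cases b with
          | nil => exact absurd rfl hne
          | cons bh bt =>
            obtain ⟨x, hx, hxs⟩ := ihP (bh :: bt) bh ((bh :: bt).getLast (by simp))
              (by simp) (List.getLast?_eq_getLast (by simp))
              (hhdb bh rfl)
              (hlstb _ (List.getLast?_eq_getLast (by simp))) hchb
            obtain ⟨xs, hxs1, hxs2⟩ := ih fun b' hb' => hb b' (List.mem_cons_of_mem _ hb')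
            refine ⟨x :: xs, ?_, by simp [hxs, hxs2]⟩
            intro y hy
            rcases List.mem_cons.mp hy with rfl | hy
            · exact hx
            · exact hxs1 y hy
      obtain ⟨xs, hxs1, hxs2⟩ := hbuild bs fun b hb =>
        ⟨(hbs1 b hb).1, (hbs1 b hb).2.1, (hbs1 b hb).2.2, hhead b hb⟩
      refine ⟨xs.flatten, ?_, ?_⟩
      · rw [marked_star]
        exact Language.join_mem_kstar hxs1
      · rw [List.map_flatten, hxs2, ← hflat]

lemma chain_of_marked {α : RegularExpression σ} :
    ∀ (x u : List (σ × ℕ)), (u ++ x) ∈ (marked α).matches' →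
      List.Chain' (fun i j => j ∈ follow α i) (List.map Prod.snd x) := by
  intro x
  induction x with
  | nil => intro u _; exact List.chain'_nil
  | cons p x' ih =>
    intro u hu
    cases x' with
    | nil => exact List.chain'_singleton _
    | cons q x'' =>
      rw [List.map_cons, List.map_cons, List.chain'_cons]
      constructor
      · have hp2 : p.2 ≠ 0 := by
          have := (letter_mem hu (p := p) (by simp)).2.1
          omega
        rw [follow_ne α hp2]
        exact ⟨p.1, q.1, u, x'', by simpa using hu⟩
      · have h2 : (u ++ [p]) ++ (q :: x'') ∈ (marked α).matches' := by simpa using hu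
        simpa using ih (u ++ [p]) h2

lemma run_exists {α : RegularExpression σ} :
    ∀ (x : List (σ × ℕ)) (i : Pos0 α),
      (∀ p ∈ x, letterAt α p.2 = some p.1 ∧ p.2 ≤ alph α) →
      List.Chain' (fun m n => n ∈ follow α m) (i.1 :: List.map Prod.snd x) →
      ∃ q : Pos0 α, NRun (posNFA α) i (List.map Prod.fst x) q ∧
        (i.1 :: List.map Prod.snd x).getLast? = some q.1 := by
  intro x
  induction x with
  | nil => intro i _ _; exact ⟨i, NRun.nil i, rfl⟩
  | cons p x' ih =>
    intro i hlet hch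
    rw [List.map_cons, List.chain'_cons] at hch
    have hp := hlet p (by simp)
    have hq : (⟨p.2, hp.2⟩ : Pos0 α) ∈ (posNFA α).step i p.1 := ⟨hch.1, hp.1⟩
    obtain ⟨q, hrun, hlast⟩ := ih ⟨p.2, hp.2⟩ (fun r hr => hlet r (by simp [hr])) hch.2
    refine ⟨q, NRun.cons hq hrun, ?_⟩
    rw [List.map_cons, List.getLast?_cons_cons]
    exact hlast

lemma run_extract {α : RegularExpression σ} {i : Pos0 α} {w : List σ} {q : Pos0 α}
    (h : NRun (posNFA α) i w q) :
    ∃ x : List (σ × ℕ), List.map Prod.fst x = w ∧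
      (∀ p ∈ x, letterAt α p.2 = some p.1) ∧
      List.Chain' (fun m n => n ∈ follow α m) (i.1 :: List.map Prod.snd x) ∧
      (i.1 :: List.map Prod.snd x).getLast? = some q.1 := by
  induction h with
  | nil q => exact ⟨[], rfl, by simp, List.chain'_singleton _, rfl⟩
  | @cons q0 r s a w0 hstep hrun ih =>
    obtain ⟨x, hxw, hlet, hch, hlast⟩ := ih
    refine ⟨(a, r.1) :: x, by rw [List.map_cons, hxw], ?_, ?_, ?_⟩
    · intro p hp
      rcases List.mem_cons.mp hp with rfl | hp
      · exact hstep.2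
      · exact hlet p hp
    · rw [List.map_cons, List.chain'_cons]
      exact ⟨hstep.1, hch⟩
    · rw [List.map_cons, List.getLast?_cons_cons]
      exact hlast

lemma last_subset_lastZero (α : RegularExpression σ) : last α ⊆ lastZero α := by
  intro j hj
  rw [lastZero]
  split_ifs
  · exact Set.mem_union_left _ hj
  · exact hj

/-- The position automaton accepts exactly `L(α)`. -/
theorem posNFA_accepts (α : RegularExpression σ) : (posNFA α).accepts = α.matches' := by
  ext w
  rw [mem_accepts_iff_nrun]
  constructor
  · rintro ⟨p, hp, q, hq, hrun⟩
    have hp0 : p.1 = 0 := hp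
    have hq0 : q.1 ∈ lastZero α := hq
    obtain ⟨x, hxw, hlet, hch, hlast⟩ := run_extract hrun
    cases x with
    | nil =>
      simp only [List.map_nil] at hlast hxw
      have hpq : p.1 = q.1 := by simpa using hlast
      have hnil : [] ∈ α.matches' := by
        by_contra hne
        rw [lastZero, if_neg hne] at hq0
        have := (last_spec hq0).1
        omega
      rw [← hxw]
      exact hnil
    | cons p0 x' =>
      rw [List.map_cons, List.chain'_cons] at hch
      obtain ⟨hch1, hch2⟩ := hch
      rw [hp0, follow_zero] at hch1
      rw [List.map_cons, List.getLast?_cons_cons] at hlast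
      have hpos : ∀ k ∈ p0.2 :: List.map Prod.snd x', 0 < k ∧ k ≤ alph α := by
        refine chain_all (I := fun k => 0 < k ∧ k ≤ alph α) ?_ p0.2 _ (first_spec hch1) hch2
        intro i k hi hk
        exact (follow_spec (by omega) hk).2
      have hqlast : q.1 ∈ last α := by
        have hqmem := List.mem_of_getLast? hlast
        have hqpos := (hpos q.1 hqmem).1
        by_cases hε : [] ∈ α.matches'
        · rw [lastZero, if_pos hε] at hq0
          rcases hq0 with h | h
          · exact h
          · simp only [Set.mem_singleton_iff] at h
            omega
        · rwa [lastZero, if_neg hε] at hq0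
      obtain ⟨x'', hx''m, hx''s⟩ := glushkov_main α (p0.2 :: List.map Prod.snd x')
        p0.2 q.1 (by simp) hlast hch1 hqlast hch2
      have heq : (p0 :: x') = x'' :=
        eq_of_letters (p0 :: x') x'' hlet (fun r hr => (letter_mem hx''m hr).1)
          (by rw [List.map_cons, hx''s])
      rw [← heq] at hx''m
      have himg : List.map Prod.fst (p0 :: x') ∈ List.map Prod.fst '' (marked α).matches' :=
        ⟨p0 :: x', hx''m, rfl⟩
      rw [proj_marked] at himg
      rw [← hxw]
      exact himg
  · intro hw
    have hw2 : w ∈ List.map Prod.fst '' (marked α).matches' := by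
      rw [proj_marked]; exact hw
    obtain ⟨x, hx, hxw⟩ := hw2
    cases x with
    | nil =>
      rw [List.map_nil] at hxw
      subst hxw
      refine ⟨⟨0, Nat.zero_le _⟩, rfl, ⟨0, Nat.zero_le _⟩, ?_, NRun.nil _⟩
      show (0 : ℕ) ∈ lastZero α
      rw [lastZero, if_pos hw]
      exact Set.mem_union_right _ rfl
    | cons p0 x' =>
      have hch0 : List.Chain' (fun m n => n ∈ follow α m)
          ((0 : ℕ) :: List.map Prod.snd (p0 :: x')) := by
        rw [List.map_cons, List.chain'_cons]
        constructor
        · rw [follow_zero]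
          exact ⟨p0.1, x', by exact hx⟩
        · simpa using chain_of_marked (p0 :: x') [] (by exact hx)
      have hlet : ∀ p ∈ p0 :: x', letterAt α p.2 = some p.1 ∧ p.2 ≤ alph α :=
        fun p hp => ⟨(letter_mem hx hp).1, (letter_mem hx hp).2.2⟩
      obtain ⟨q, hrun, hlast⟩ := run_exists (p0 :: x') ⟨0, Nat.zero_le _⟩ hlet hch0
      refine ⟨⟨0, Nat.zero_le _⟩, rfl, q, ?_, by rw [← hxw]; exact hrun⟩
      -- q is accepting
      rcases (p0 :: x').eq_nil_or_concat' with habs | ⟨y0, pl, heq⟩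
      · simp at habs
      · have hgl : (List.map Prod.snd (p0 :: x')).getLast? = some pl.2 := by
          rw [heq, List.map_append]
          simp
        rw [List.map_cons] at hgl hlast
        rw [List.getLast?_cons_cons, hgl] at hlast
        have hqpl : q.1 = pl.2 := (Option.some_inj.mp hlast).symm
        have hlastmem : q.1 ∈ last α := by
          rw [hqpl]
          exact ⟨pl.1, y0, by rw [show ((pl.1, pl.2) : σ × ℕ) = pl from rfl, ← heq]; exact hx⟩
        exact last_subset_lastZero α hlastmem

/-- The follow automaton accepts exactly `L(α)`. -/
theorem followNFA_accepts (α : RegularExpression σ) :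
    (followNFA α).accepts = α.matches' := by
  have hstep : ∀ (p q : Pos0 α) (a : σ), (followSetoid α).r p q →
      (posNFA α).step p a = (posNFA α).step q a := by
    intro p q a h
    have h2 : follow α p.1 = follow α q.1 := h.2
    ext r
    show r.1 ∈ follow α p.1 ∧ letterAt α r.1 = some a ↔
      r.1 ∈ follow α q.1 ∧ letterAt α r.1 = some a
    rw [h2]
  have hacc : ∀ p q : Pos0 α, (followSetoid α).r p q →
      (p ∈ (posNFA α).accept ↔ q ∈ (posNFA α).accept) := fun p q h => h.1
  rw [show followNFA α = quotNFA (posNFA α) (followSetoid α) from rfl,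
    quotNFA_accepts _ _ hacc hstep, posNFA_accepts]
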